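/- Let X_N be exchangeable {0,1}-valued with γ = ΣX_i symmetric about N/2. If γ is tighter than the Binomial(N,1/2), then the gambler's belief holds: for every n < N and every x ∈ {0,1}^n with positive probability, if the number of 0's among x_1,...,x_n strictly exceeds the number of 1's, then P(X_{n+1}=1 | X_1=x_1,...,X_n=x_n) > 1/2. -/

import Mathlib

open Finset

/-- number of 1's (trues) in a 0-1 vector -/
def cnt {n : ℕ} (x : Fin n → Bool) : ℕ := (Finset.univ.filter fun i => x i = true).card

/-- P(γ = k): probability that the total count of 1's equals k -/
def gam (N : ℕ) (p : (Fin N → Bool) → ℝ) (k : ℕ) : ℝ :=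
  ∑ y : Fin N → Bool, if cnt y = k then p y else 0

/-- P(X_1 = x_1, ..., X_n = x_n): probability of observing the prefix x -/
def pref (N : ℕ) (p : (Fin N → Bool) → ℝ) {n : ℕ} (hn : n ≤ N) (x : Fin n → Bool) : ℝ :=
  ∑ y : Fin N → Bool, if (∀ i : Fin n, y (Fin.castLE hn i) = x i) then p y else 0

/-! ### Auxiliary lemmas -/

lemma cnt_le {n : ℕ} (x : Fin n → Bool) : cnt x ≤ n := by
  have := Finset.card_filter_le (Finset.univ : Finset (Fin n)) (fun i => x i = true)
  simpa [cnt] using this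

lemma cnt_eq_sum {n : ℕ} (x : Fin n → Bool) : cnt x = ∑ i, if x i then 1 else 0 :=
  Finset.card_filter _ _

lemma perm_exists {N : ℕ} (y y' : Fin N → Bool) (h : cnt y = cnt y') :
    ∃ σ : Equiv.Perm (Fin N), y ∘ σ = y' := by
  classical
  set s : Finset (Fin N) := Finset.univ.filter fun i => y i = true with hs
  set s' : Finset (Fin N) := Finset.univ.filter fun i => y' i = true with hs'
  have hcard : s'.card = s.card := h.symm
  have hcardc : (s'ᶜ).card = (sᶜ).card := by
    simp [Finset.card_compl, hcard]
  let e1 : {i // i ∈ s'} ≃ {i // i ∈ s} := Finset.equivOfCardEq hcard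
  let e2 : {i // i ∈ s'ᶜ} ≃ {i // i ∈ sᶜ} := Finset.equivOfCardEq hcardc
  let e2' : {i // ¬ i ∈ s'} ≃ {i // ¬ i ∈ s} :=
    ((Equiv.subtypeEquivRight (fun x => (Finset.mem_compl).symm)).trans e2).trans
      (Equiv.subtypeEquivRight (fun x => Finset.mem_compl))
  let σ : Equiv.Perm (Fin N) :=
    ((Equiv.sumCompl (· ∈ s')).symm.trans ((e1.sumCongr e2').trans (Equiv.sumCompl (· ∈ s))))
  have key : ∀ i, σ i ∈ s ↔ i ∈ s' := by
    intro i
    by_cases hi : i ∈ s'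
    · have h1 : (Equiv.sumCompl (· ∈ s')).symm i = Sum.inl ⟨i, hi⟩ := dif_pos hi
      simp only [σ, Equiv.trans_apply, h1, Equiv.sumCongr_apply, Sum.map_inl,
        Equiv.sumCompl_apply_inl]
      exact iff_of_true (e1 ⟨i, hi⟩).2 hi
    · have h1 : (Equiv.sumCompl (· ∈ s')).symm i = Sum.inr ⟨i, hi⟩ := dif_neg hi
      simp only [σ, Equiv.trans_apply, h1, Equiv.sumCongr_apply, Sum.map_inr,
        Equiv.sumCompl_apply_inr]
      exact iff_of_false (e2' ⟨i, hi⟩).2 hi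
  refine ⟨σ, funext fun i => ?_⟩
  have hk := key i
  simp only [hs, hs', Finset.mem_filter, Finset.mem_univ, true_and] at hk
  simp only [Function.comp_apply]
  cases hyi : y' i
  · cases hy : y (σ i)
    · rfl
    · exact absurd (hk.mp hy) (by simp [hyi])
  · exact hk.mpr hyi

lemma card_cnt_eq (ℓ j : ℕ) :
    ((Finset.univ : Finset (Fin ℓ → Bool)).filter fun z => cnt z = j).card = ℓ.choose j := by
  classical
  have hp := Finset.card_powersetCard j (Finset.univ : Finset (Fin ℓ))
  rw [Finset.card_univ, Fintype.card_fin] at hp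
  rw [← hp]
  apply Finset.card_nbij' (fun z => Finset.univ.filter fun i => z i = true)
    (fun s => fun i => decide (i ∈ s))
  · intro z hz
    simp only [Finset.coe_filter, Finset.mem_coe, Finset.mem_filter, Finset.mem_univ, true_and, Set.mem_setOf_eq] at hz
    simp only [Finset.mem_coe, Finset.mem_powersetCard]
    exact ⟨Finset.subset_univ _, hz⟩
  · intro s hsm
    simp only [Finset.mem_coe, Finset.mem_powersetCard] at hsm
    simp only [Finset.mem_coe, Finset.mem_filter, Finset.mem_univ, true_and]; unfold cnt
    rw [← hsm.2]
    congr 1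
    ext i
    simp
  · intro z _
    funext i
    simp
  · intro s _
    ext i
    simp

/-! ### glue / restrict machinery -/

def glueN {ν M : ℕ} (w : Fin ν → Bool) (z : Fin M → Bool) : ℕ → Bool :=
  fun i => if h : i < ν then w ⟨i, h⟩ else if h2 : i - ν < M then z ⟨i - ν, h2⟩ else false

def glue {N ν : ℕ} (_hν : ν ≤ N) (w : Fin ν → Bool) (z : Fin (N - ν) → Bool) : Fin N → Bool :=
  fun i => glueN w z i.val

def restr {N ν : ℕ} (hν : ν ≤ N) (y : Fin N → Bool) : Fin (N - ν) → Bool :=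
  fun t => y ⟨ν + t.val, by omega⟩

lemma glue_lt {N ν : ℕ} (hν : ν ≤ N) (w : Fin ν → Bool) (z : Fin (N - ν) → Bool)
    (i : Fin ν) : glue hν w z (Fin.castLE hν i) = w i := by
  simp only [glue, glueN, Fin.coe_castLE, i.isLt, dif_pos, Fin.eta]

lemma restr_glue {N ν : ℕ} (hν : ν ≤ N) (w : Fin ν → Bool) (z : Fin (N - ν) → Bool) :
    restr hν (glue hν w z) = z := by
  funext t
  have h1 : ¬ (ν + t.val < ν) := by omega
  have h2 : ν + t.val - ν = t.val := by omega
  simp only [restr, glue, glueN, h1, dif_neg, not_false_iff, h2, t.isLt, dif_pos, Fin.eta]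

lemma glue_restr {N ν : ℕ} (hν : ν ≤ N) (w : Fin ν → Bool) (y : Fin N → Bool)
    (hy : ∀ i : Fin ν, y (Fin.castLE hν i) = w i) : glue hν w (restr hν y) = y := by
  funext i
  by_cases h : i.val < ν
  · have : glue hν w (restr hν y) i = w ⟨i.val, h⟩ := by
      simp only [glue, glueN, h, dif_pos]
    rw [this, ← hy ⟨i.val, h⟩]
    congr 1
  · have h2 : i.val - ν < N - ν := by omega
    have : glue hν w (restr hν y) i = restr hν y ⟨i.val - ν, h2⟩ := by
      simp only [glue, glueN, h, dif_neg, not_false_iff, h2, dif_pos]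
    rw [this]
    simp only [restr]
    congr 1
    ext
    simp
    omega

lemma cnt_glue {N ν : ℕ} (hν : ν ≤ N) (w : Fin ν → Bool) (z : Fin (N - ν) → Bool) :
    cnt (glue hν w z) = cnt w + cnt z := by
  rw [cnt_eq_sum, cnt_eq_sum, cnt_eq_sum]
  have h1 : ∑ i : Fin N, (if glue hν w z i then 1 else 0)
      = ∑ i ∈ Finset.range N, (if glueN w z i then 1 else 0) :=
    Fin.sum_univ_eq_sum_range (fun i => if glueN w z i then 1 else 0) N
  rw [h1, Finset.range_eq_Ico, ← Finset.sum_Ico_consecutive _ (Nat.zero_le ν) hν]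
  congr 1
  · rw [← Finset.range_eq_Ico, ← Fin.sum_univ_eq_sum_range (fun i => if glueN w z i then 1 else 0) ν]
    apply Finset.sum_congr rfl
    intro i _
    simp only [glueN, i.isLt, dif_pos, Fin.eta]
  · rw [Finset.sum_Ico_eq_sum_range, ← Fin.sum_univ_eq_sum_range
      (fun i => if glueN w z (ν + i) then 1 else 0) (N - ν)]
    apply Finset.sum_congr rfl
    intro t _
    have h1 : ¬ (ν + t.val < ν) := by omega
    have h2 : ν + t.val - ν = t.val := by omega
    simp only [glueN, h1, dif_neg, not_false_iff, h2, t.isLt, dif_pos, Fin.eta]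

lemma pref_eq {N ν : ℕ} (p : (Fin N → Bool) → ℝ) (f : ℕ → ℝ)
    (hpf : ∀ y, p y = f (cnt y)) (hν : ν ≤ N) (w : Fin ν → Bool) :
    pref N p hν w = ∑ z : Fin (N - ν) → Bool, f (cnt w + cnt z) := by
  classical
  rw [pref, ← Finset.sum_filter]
  apply Finset.sum_nbij' (restr hν) (glue hν w)
  · intro y _; exact Finset.mem_univ _
  · intro z _
    simp only [Finset.mem_filter, Finset.mem_univ, true_and]
    exact glue_lt hν w z
  · intro y hy
    simp only [Finset.mem_filter, Finset.mem_univ, true_and] at hy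
    exact glue_restr hν w y hy
  · intro z _; exact restr_glue hν w z
  · intro y hy
    simp only [Finset.mem_filter, Finset.mem_univ, true_and] at hy
    rw [hpf y]
    congr 1
    conv_lhs => rw [← glue_restr hν w y hy]
    exact cnt_glue hν w (restr hν y)

/-! ### snoc lemmas -/

lemma cnt_snoc {n : ℕ} (x : Fin n → Bool) (b : Bool) :
    cnt (Fin.snoc x b) = cnt x + (if b then 1 else 0) := by
  rw [cnt_eq_sum, cnt_eq_sum, Fin.sum_univ_castSucc]
  simp [Fin.snoc_castSucc, Fin.snoc_last]

lemma ext_snoc {N n : ℕ} (hn : n < N) (x : Fin n → Bool) (b : Bool) (y : Fin N → Bool) :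
    (∀ i : Fin (n+1), y (Fin.castLE hn i) = (Fin.snoc x b : Fin (n+1) → Bool) i) ↔
      ((∀ i : Fin n, y (Fin.castLE hn.le i) = x i) ∧ y ⟨n, hn⟩ = b) := by
  constructor
  · intro h
    constructor
    · intro i
      have h1 := h i.castSucc
      rw [Fin.snoc_castSucc] at h1
      rw [← h1]
      congr 1
    · have h2 := h (Fin.last n)
      rw [Fin.snoc_last] at h2
      rw [← h2]
      congr 1
  · rintro ⟨h1, h2⟩ i
    induction i using Fin.lastCases with
    | last =>
      rw [Fin.snoc_last, ← h2]
      congr 1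
    | cast j =>
      rw [Fin.snoc_castSucc, ← h1 j]
      congr 1

lemma pref_split {N n : ℕ} (p : (Fin N → Bool) → ℝ) (hn : n < N) (x : Fin n → Bool) :
    pref N p hn.le x = pref N p hn (Fin.snoc x true) + pref N p hn (Fin.snoc x false) := by
  classical
  rw [pref, pref, pref, ← Finset.sum_add_distrib]
  apply Finset.sum_congr rfl
  intro y _
  have ht := ext_snoc hn x true y
  have hf := ext_snoc hn x false y
  by_cases hA : ∀ i : Fin n, y (Fin.castLE hn.le i) = x i
  · cases hb : y ⟨n, hn⟩ <;> simp [ht, hf, hA, hb]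
  · simp [ht, hf, hA]

/-! ### binomial monotonicity -/

lemma choose_step {m a : ℕ} (h : 2*a+1 ≤ m) : m.choose a ≤ m.choose (a+1) := by
  have hid := Nat.choose_succ_right_eq m a
  have h1 : m.choose a * (a+1) ≤ m.choose a * (m - a) :=
    Nat.mul_le_mul_left _ (by omega)
  rw [← hid] at h1
  exact Nat.le_of_mul_le_mul_right h1 (Nat.succ_pos a)

lemma choose_mono' {m : ℕ} : ∀ b a : ℕ, a ≤ b → 2*b ≤ m → m.choose a ≤ m.choose b := by
  intro b
  induction b with
  | zero => intro a ha _; interval_cases a; rfl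
  | succ b ih =>
    intro a ha hb
    rcases Nat.lt_or_ge a (b+1) with h | h
    · exact (ih a (by omega) (by omega)).trans (choose_step (by omega))
    · have : a = b + 1 := by omega
      rw [this]

lemma choose_mono {m a b : ℕ} (hab : a ≤ b) (h : a + b ≤ m) : m.choose a ≤ m.choose b := by
  rcases le_or_gt (2*b) m with h2 | h2
  · exact choose_mono' b a hab h2
  · have hbm : b ≤ m := by omega
    rw [← Nat.choose_symm hbm]
    exact choose_mono' (m - b) a (by omega) (by omega)

/-! ### key positivity lemma -/

lemma key_sum (N k m t : ℕ) (d : ℕ → ℝ) (ht : 1 ≤ t) (hN : 2*k + t + m + 1 = N)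
    (hpos : ∀ i, 2*i + 1 < N → 0 < d i)
    (hanti : ∀ i, i ≤ N - 1 → d (N - 1 - i) = - d i) :
    0 < ∑ j ∈ Finset.range (m+1), (m.choose j : ℝ) * d (k+j) := by
  set M := m + t with hM
  have hext : ∑ j ∈ Finset.range (m+1), (m.choose j : ℝ) * d (k+j)
      = ∑ j ∈ Finset.range (M+1), (m.choose j : ℝ) * d (k+j) := by
    apply Finset.sum_subset
    · apply Finset.range_subset_range.2; omega
    · intro j _ hj
      have : m < j := by simp [Finset.mem_range] at hj ⊢; omega
      rw [Nat.choose_eq_zero_of_lt this]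
      simp
  have hrefl : ∑ j ∈ Finset.range (M+1), (m.choose j : ℝ) * d (k+j)
      = ∑ j ∈ Finset.range (M+1), (m.choose (M-j) : ℝ) * d (k+(M-j)) := by
    rw [← Finset.sum_range_reflect]
    apply Finset.sum_congr rfl
    intro j hj
    simp only [Finset.mem_range] at hj
    congr 2 <;> omega
  have hanti' : ∀ j, j ≤ M → d (k + (M - j)) = - d (k + j) := by
    intro j hj
    have h1 : k + (M - j) = N - 1 - (k + j) := by omega
    rw [h1]
    exact hanti (k+j) (by omega)
  have hterm : ∀ j, 2*j < M → 0 ≤ ((m.choose j : ℝ) - (m.choose (M-j) : ℝ)) * d (k+j) := by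
    intro j h2j
    have hd : 0 < d (k+j) := hpos (k+j) (by omega)
    apply mul_nonneg _ hd.le
    rw [sub_nonneg, Nat.cast_le]
    rcases Nat.lt_or_ge m (M - j) with h | h
    · rw [Nat.choose_eq_zero_of_lt h]; exact Nat.zero_le _
    · have hjt : t ≤ j := by omega
      have hmm : m - (M - j) = j - t := by omega
      rw [← Nat.choose_symm h, hmm]
      exact choose_mono (by omega) (by omega)
  have h2S : 0 < ∑ j ∈ Finset.range (M+1),
      ((m.choose j : ℝ) - (m.choose (M-j) : ℝ)) * d (k+j) := by
    apply Finset.sum_pos'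
    · intro j hj
      simp only [Finset.mem_range] at hj
      rcases Nat.lt_trichotomy (2*j) M with h | h | h
      · exact hterm j h
      · have hd0 : d (k+j) = 0 := by
          have := hanti' j (by omega)
          have hMj : M - j = j := by omega
          rw [hMj] at this
          linarith
        rw [hd0, mul_zero]
      · have hj' : M - j < M := by omega
        have := hterm (M - j) (by omega)
        have hMM : M - (M - j) = j := by omega
        rw [hMM] at this
        have hdd := hanti' j (by omega)
        nlinarith [this]
    · refine ⟨0, Finset.mem_range.2 (by omega), ?_⟩
      have hd : 0 < d (k+0) := hpos (k+0) (by omega)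
      have hc0 : (m.choose 0 : ℝ) = 1 := by simp
      have hcM : (m.choose (M-0) : ℝ) = 0 := by
        simp only [Nat.sub_zero]
        rw [Nat.choose_eq_zero_of_lt (by omega)]
        simp
      rw [hc0, hcM]
      linarith
  have hcomb : 2 * (∑ j ∈ Finset.range (M+1), (m.choose j : ℝ) * d (k+j))
      = ∑ j ∈ Finset.range (M+1), ((m.choose j : ℝ) - (m.choose (M-j) : ℝ)) * d (k+j) := by
    rw [two_mul]
    nth_rewrite 2 [hrefl]
    rw [← Finset.sum_add_distrib]
    apply Finset.sum_congr rfl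
    intro j hj
    simp only [Finset.mem_range] at hj
    rw [hanti' j (by omega)]
    ring
  rw [hext]
  nlinarith [h2S, hcomb]

/-! ### the one-sequence probability q -/

noncomputable def qq (N : ℕ) (p : (Fin N → Bool) → ℝ) (i : ℕ) : ℝ :=
  gam N p i / (N.choose i : ℝ)

section qlem
variable {N : ℕ} {p : (Fin N → Bool) → ℝ}

lemma gam_eq_choose_mul (hexch : ∀ σ : Equiv.Perm (Fin N), ∀ y : Fin N → Bool, p (y ∘ σ) = p y)
    (y : Fin N → Bool) : gam N p (cnt y) = (N.choose (cnt y) : ℝ) * p y := by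
  classical
  rw [gam, ← Finset.sum_filter]
  have : ∀ y' ∈ (Finset.univ : Finset (Fin N → Bool)).filter fun y' => cnt y' = cnt y,
      p y' = p y := by
    intro y' hy'
    simp only [Finset.mem_filter, Finset.mem_univ, true_and] at hy'
    obtain ⟨σ, hσ⟩ := perm_exists y y' hy'.symm
    rw [← hσ, hexch]
  rw [Finset.sum_congr rfl this, Finset.sum_const, card_cnt_eq, nsmul_eq_mul]

lemma p_eq_qq (hexch : ∀ σ : Equiv.Perm (Fin N), ∀ y : Fin N → Bool, p (y ∘ σ) = p y)
    (y : Fin N → Bool) : p y = qq N p (cnt y) := by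
  have hc : (0:ℝ) < (N.choose (cnt y) : ℝ) := by
    exact_mod_cast Nat.choose_pos (cnt_le y)
  rw [qq, gam_eq_choose_mul hexch y]
  field_simp

lemma qq_symm (hsymm : ∀ i ≤ N, gam N p i = gam N p (N - i)) {i : ℕ} (hi : i ≤ N) :
    qq N p i = qq N p (N - i) := by
  rw [qq, qq, hsymm i hi, Nat.choose_symm hi]

lemma gam_nonneg (hnn : ∀ y, 0 ≤ p y) (i : ℕ) : 0 ≤ gam N p i := by
  apply Finset.sum_nonneg
  intro y _
  split
  · exact hnn y
  · exact le_refl 0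

lemma qq_lt (hnn : ∀ y, 0 ≤ p y)
    (htighter : ∀ i : ℕ, 1 ≤ i → i ≤ N / 2 →
      gam N p i / gam N p (i - 1) > ((N - i + 1 : ℕ) : ℝ) / (i : ℝ))
    {i : ℕ} (h : 2*(i+1) ≤ N) : qq N p i < qq N p (i+1) := by
  have hiN : i + 1 ≤ N := by omega
  have ht := htighter (i+1) (by omega) (by omega)
  have hsimp : (i+1) - 1 = i := by omega
  have hNi : N - (i+1) + 1 = N - i := by omega
  rw [hsimp, hNi] at ht
  set g0 := gam N p i
  set g1 := gam N p (i+1)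
  have hg0 : 0 ≤ g0 := gam_nonneg hnn i
  have hRpos : (0:ℝ) < ((N - i : ℕ) : ℝ) / ((i+1 : ℕ) : ℝ) := by
    apply div_pos <;> [exact_mod_cast Nat.sub_pos_of_lt (by omega); positivity]
  have hg0pos : 0 < g0 := by
    rcases eq_or_lt_of_le hg0 with h0 | h0
    · exfalso
      rw [← h0] at ht
      simp only [div_zero] at ht
      push_cast at ht hRpos
      linarith
    · exact h0
  have hkey : g0 * ((N - i : ℕ) : ℝ) < g1 * ((i+1 : ℕ) : ℝ) := by
    rw [gt_iff_lt, div_lt_div_iff₀ (by positivity) hg0pos] at ht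
    push_cast at ht ⊢
    linarith
  have hid : (N.choose (i+1) : ℝ) * ((i+1 : ℕ) : ℝ) = (N.choose i : ℝ) * ((N - i : ℕ) : ℝ) := by
    exact_mod_cast congrArg (Nat.cast : ℕ → ℝ) (Nat.choose_succ_right_eq N i)
  have hc0 : (0:ℝ) < (N.choose i : ℝ) := by exact_mod_cast Nat.choose_pos (by omega)
  have hc1 : (0:ℝ) < (N.choose (i+1) : ℝ) := by exact_mod_cast Nat.choose_pos hiN
  rw [qq, qq, div_lt_div_iff₀ hc0 hc1]
  have hi1pos : (0:ℝ) < ((i+1:ℕ) : ℝ) := by positivity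
  nlinarith [hkey, hid, hc0, hc1]

end qlem

/-- Statement: if γ is symmetric about N/2 and tighter than the Binomial(N,1/2), then whenever
strictly more 0's than 1's have been observed, P(X_{n+1}=1 | x) > 1/2. -/
theorem tighter_gamblers_belief (N : ℕ) (p : (Fin N → Bool) → ℝ)
    (hnn : ∀ y, 0 ≤ p y) (hsum : ∑ y, p y = 1)
    (hexch : ∀ σ : Equiv.Perm (Fin N), ∀ y : Fin N → Bool, p (y ∘ σ) = p y)
    (hsymm : ∀ i ≤ N, gam N p i = gam N p (N - i))
    (htighter : ∀ i : ℕ, 1 ≤ i → i ≤ N / 2 →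
      gam N p i / gam N p (i - 1) > ((N - i + 1 : ℕ) : ℝ) / (i : ℝ)) :
    ∀ (n : ℕ) (hn : n < N) (x : Fin n → Bool),
      2 * cnt x < n →
      0 < pref N p hn.le x →
      pref N p hn (Fin.snoc x true) / pref N p hn.le x > 1 / 2 := by
  classical
  intro n hn x hk hxpos
  set k := cnt x with hkdef
  set m := N - (n+1) with hmdef
  have hq : ∀ y, p y = qq N p (cnt y) := p_eq_qq hexch
  set d : ℕ → ℝ := fun i => qq N p (i+1) - qq N p i with hddef
  -- express the two extensions
  have hT : pref N p hn (Fin.snoc x true)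
      = ∑ z : Fin (N - (n+1)) → Bool, qq N p ((k + cnt z) + 1) := by
    rw [pref_eq p (qq N p) hq hn (Fin.snoc x true)]
    apply Finset.sum_congr rfl
    intro z _
    congr 1
    rw [cnt_snoc]
    simp only [if_true, ← hkdef]
    omega
  have hF : pref N p hn (Fin.snoc x false)
      = ∑ z : Fin (N - (n+1)) → Bool, qq N p (k + cnt z) := by
    rw [pref_eq p (qq N p) hq hn (Fin.snoc x false)]
    apply Finset.sum_congr rfl
    intro z _
    congr 1
    rw [cnt_snoc]
    simp [← hkdef]
  have hTF : pref N p hn (Fin.snoc x true) - pref N p hn (Fin.snoc x false)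
      = ∑ z : Fin (N - (n+1)) → Bool, d (k + cnt z) := by
    rw [hT, hF, ← Finset.sum_sub_distrib]
  -- group by count
  have hgroup : ∑ z : Fin (N - (n+1)) → Bool, d (k + cnt z)
      = ∑ j ∈ Finset.range (m+1), (m.choose j : ℝ) * d (k+j) := by
    rw [← Finset.sum_fiberwise_of_maps_to (t := Finset.range (m+1)) (g := fun z => cnt z)
      (fun z _ => Finset.mem_range.2 (by show cnt z < m + 1; have := cnt_le z; omega))
      (fun z => d (k + cnt z))]
    apply Finset.sum_congr rfl
    intro j _
    have hconst : ∀ z ∈ (Finset.univ : Finset (Fin (N - (n+1)) → Bool)).filter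
        fun z => cnt z = j, d (k + cnt z) = d (k + j) := by
      intro z hz
      simp only [Finset.mem_filter, Finset.mem_univ, true_and] at hz
      rw [hz]
    rw [Finset.sum_congr rfl hconst, Finset.sum_const]
    have hcard := card_cnt_eq (N - (n+1)) j
    rw [← hmdef] at hcard
    rw [hcard, nsmul_eq_mul]
  -- positivity via the key lemma
  have hpos' : ∀ i, 2*i + 1 < N → 0 < d i := by
    intro i hi
    have := qq_lt hnn htighter (i := i) (by omega)
    simp only [hddef]
    linarith
  have hanti : ∀ i, i ≤ N - 1 → d (N - 1 - i) = - d i := by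
    intro i hi
    have hN1 : 1 ≤ N := by omega
    simp only [hddef]
    rw [show N - 1 - i + 1 = N - i by omega, show N - 1 - i = N - (i+1) by omega,
      ← qq_symm hsymm (show i ≤ N by omega), ← qq_symm hsymm (show i+1 ≤ N by omega)]
    ring
  have hS : 0 < ∑ j ∈ Finset.range (m+1), (m.choose j : ℝ) * d (k+j) :=
    key_sum N k m (n - 2*k) d (by omega) (by omega) hpos' hanti
  have hTgtF : pref N p hn (Fin.snoc x false) < pref N p hn (Fin.snoc x true) := by
    have := hTF
    rw [hgroup] at this
    linarith
  have hsplit := pref_split p hn x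
  rw [gt_iff_lt, lt_div_iff₀ hxpos]
  linarith
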